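/- In a stochastic game, if a distribution d₀ is not almost-sure winning for the reachability objective ◇T, then there exists a memoryless player-2 strategy τ such that for all player-1 strategies σ and all i ≥ 0, Pr^{σ,τ}_{d₀}(reaching T within i steps) ≤ 1 − η₀·η^n, where n = |Q|, η is the smallest positive transition probability, and η₀ is the smallest positive probability in d₀. -/

import Mathlib

open Finset

/-- A two-player stochastic game: transition kernel `δ q a b q'`. -/
structure Game (Q A : Type) where
  δ : Q → A → A → Q → ℝ

/-- Validity of the transition kernel: a probability distribution on `Q` for each `q,a,b`. -/
def IsGame {Q A : Type} [Fintype Q] (G : Game Q A) : Prop :=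
  (∀ q a b q', 0 ≤ G.δ q a b q') ∧ (∀ q a b, (∑ q' : Q, G.δ q a b q') = 1)

/-- A probability distribution over a finite set. -/
def IsDist {Q : Type} [Fintype Q] (d : Q → ℝ) : Prop :=
  (∀ q, 0 ≤ d q) ∧ (∑ q : Q, d q) = 1

/-- Randomized player-1 strategies: map (reversed) state histories to distributions on actions. -/
abbrev Strat1 (Q A : Type) := List Q → A → ℝ
/-- Randomized player-2 strategies: also see the action chosen by player 1. -/
abbrev Strat2 (Q A : Type) := List Q → A → A → ℝ

def IsStrat1 {Q A : Type} [Fintype A] (σ : Strat1 Q A) : Prop :=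
  ∀ h, (∀ a, 0 ≤ σ h a) ∧ (∑ a : A, σ h a) = 1

def IsStrat2 {Q A : Type} [Fintype A] (τ : Strat2 Q A) : Prop :=
  ∀ h a, (∀ b, 0 ≤ τ h a b) ∧ (∑ b : A, τ h a b) = 1

/-- Probability of a finite state history (in reverse chronological order:
the head is the current state), with the actions marginalized out. -/
def hprob {Q A : Type} [Fintype A] (G : Game Q A) (d0 : Q → ℝ)
    (σ : Strat1 Q A) (τ : Strat2 Q A) : List Q → ℝ
  | [] => 1
  | [q] => d0 q
  | q :: q' :: h =>
      (∑ a : A, ∑ b : A, σ (q' :: h) a * τ (q' :: h) a b * G.δ q' a b q) *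
        hprob G d0 σ τ (q' :: h)

/-- The outcome sequence of distributions: probability to be in state `q` after `i` rounds. -/
def outSeq {Q A : Type} [Fintype Q] [Fintype A] (G : Game Q A) (d0 : Q → ℝ)
    (σ : Strat1 Q A) (τ : Strat2 Q A) (i : ℕ) (q : Q) : ℝ :=
  ∑ h : Fin i → Q, hprob G d0 σ τ (q :: (List.ofFn h).reverse)

/-- Probability mass of a set of states. -/
def mass {Q : Type} (d : Q → ℝ) (T : Finset Q) : ℝ := ∑ q ∈ T, d q

/-- The four synchronizing modes, on a sequence of probability masses. -/
def AlwaysSync (m : ℕ → ℝ) (ε : ℝ) : Prop := ∀ i, 1 - ε ≤ m i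
def EventSync (m : ℕ → ℝ) (ε : ℝ) : Prop := ∃ i, 1 - ε ≤ m i
def WeaklySync (m : ℕ → ℝ) (ε : ℝ) : Prop := ∀ N, ∃ i, N ≤ i ∧ 1 - ε ≤ m i
def StronglySync (m : ℕ → ℝ) (ε : ℝ) : Prop := ∃ N, ∀ i, N ≤ i → 1 - ε ≤ m i

/-- Sure winning region for a synchronizing mode `sync`: some player-1 strategy ensures
`1`-synchronization against all player-2 strategies. -/
def SureWin {Q A : Type} [Fintype Q] [Fintype A] (G : Game Q A) (T : Finset Q)
    (sync : (ℕ → ℝ) → ℝ → Prop) : Set (Q → ℝ) :=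
  {d0 | IsDist d0 ∧ ∃ σ, IsStrat1 σ ∧ ∀ τ, IsStrat2 τ →
    sync (fun i => mass (outSeq G d0 σ τ i) T) 0}

/-- Almost-sure winning region for a synchronizing mode `sync`: some player-1 strategy
ensures `(1-ε)`-synchronization for all `ε > 0` against all player-2 strategies. -/
def ASWin {Q A : Type} [Fintype Q] [Fintype A] (G : Game Q A) (T : Finset Q)
    (sync : (ℕ → ℝ) → ℝ → Prop) : Set (Q → ℝ) :=
  {d0 | IsDist d0 ∧ ∃ σ, IsStrat1 σ ∧ ∀ τ, IsStrat2 τ →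
    ∀ ε : ℝ, 0 < ε → sync (fun i => mass (outSeq G d0 σ τ i) T) ε}

/-- Dirac distribution. -/
def dirac {Q : Type} [DecidableEq Q] (q : Q) : Q → ℝ := fun q' => if q' = q then 1 else 0

open Classical in
/-- Probability of reaching `T` within `i` steps: total probability of the length-`(i+1)`
state histories that visit `T`. -/
noncomputable def reachProb {Q A : Type} [Fintype Q] [Fintype A] (G : Game Q A)
    (d0 : Q → ℝ) (σ : Strat1 Q A) (τ : Strat2 Q A) (T : Finset Q) (i : ℕ) : ℝ :=
  ∑ h : Fin (i + 1) → Q,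
    if ∃ j, h j ∈ T then hprob G d0 σ τ (List.ofFn h).reverse else 0

/-- A memoryless player-1 strategy only depends on the current state (the head of the
reversed history). -/
def Memoryless1 {Q A : Type} (σ : Strat1 Q A) : Prop :=
  ∀ h h' : List Q, h.head? = h'.head? → σ h = σ h'

/-- A memoryless player-2 strategy only depends on the current state and the action
of player 1. -/
def Memoryless2 {Q A : Type} (τ : Strat2 Q A) : Prop :=
  ∀ (h h' : List Q) (a : A), h.head? = h'.head? → τ h a = τ h' a


set_option linter.unusedSectionVars false
set_option linter.unusedVariables false

section Infra
variable {Q A : Type} [Fintype Q] [Fintype A]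

/-- snoc equivalence for splitting history sums at the last state. -/
def snocEquiv (k : ℕ) (Q : Type) : (Fin (k+1) → Q) ≃ (Fin k → Q) × Q where
  toFun h := (fun j => h j.castSucc, h (Fin.last k))
  invFun p := Fin.snoc p.1 p.2
  left_inv h := funext fun j => by
    induction j using Fin.lastCases with
    | last => simp
    | cast i => simp
  right_inv p := by
    ext j
    · simp
    · simp

lemma sum_snoc {k : ℕ} (F : (Fin (k+1) → Q) → ℝ) :
    (∑ h : Fin (k+1) → Q, F h) = ∑ f : Fin k → Q, ∑ q : Q, F (Fin.snoc f q) := by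
  rw [Fintype.sum_equiv (snocEquiv k Q) F (fun p => F (Fin.snoc p.1 p.2))
    (fun h => congrArg F (funext fun j => by
      induction j using Fin.lastCases with
      | last => simp [snocEquiv]
      | cast i => simp [snocEquiv]))]
  exact Fintype.sum_prod_type _

lemma ofFn_snoc_reverse {k : ℕ} (f : Fin k → Q) (q : Q) :
    (List.ofFn (Fin.snoc f q : Fin (k+1) → Q)).reverse
      = q :: (List.ofFn f).reverse := by
  rw [List.ofFn_succ' (Fin.snoc f q)]
  simp [List.concat_eq_append]

lemma exists_snoc_iff {k : ℕ} (f : Fin k → Q) (q : Q) (T : Finset Q) :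
    (∃ j, (Fin.snoc f q : Fin (k+1) → Q) j ∈ T) ↔ (∃ j, f j ∈ T) ∨ q ∈ T := by
  constructor
  · rintro ⟨j, hj⟩
    induction j using Fin.lastCases with
    | last => right; simpa using hj
    | cast i => left; exact ⟨i, by simpa using hj⟩
  · rintro (⟨j, hj⟩ | hq)
    · exact ⟨j.castSucc, by simpa using hj⟩
    · exact ⟨Fin.last k, by simpa using hq⟩

variable (G : Game Q A) (d0 : Q → ℝ) (σ : Strat1 Q A) (τ : Strat2 Q A)

/-- one-step kernel given the (nonempty) reversed history `h`. -/
noncomputable def K : List Q → Q → ℝ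
  | [], _ => 0
  | (q' :: h), q => ∑ a : A, ∑ b : A, σ (q' :: h) a * τ (q' :: h) a b * G.δ q' a b q

lemma hprob_cons (h : List Q) (hne : h ≠ []) (q : Q) :
    hprob G d0 σ τ (q :: h) = K G σ τ h q * hprob G d0 σ τ h := by
  match h with
  | [] => exact absurd rfl hne
  | q' :: h' => rfl

lemma K_nonneg (hG : IsGame G) (hσ : IsStrat1 σ) (hτ : IsStrat2 τ)
    (h : List Q) (q : Q) : 0 ≤ K G σ τ h q := by
  match h with
  | [] => exact le_refl 0
  | q' :: h =>
    refine Finset.sum_nonneg fun a _ => Finset.sum_nonneg fun b _ => ?_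
    exact mul_nonneg (mul_nonneg ((hσ _).1 a) ((hτ _ a).1 b)) (hG.1 _ _ _ _)

lemma K_sum (hG : IsGame G) (hσ : IsStrat1 σ) (hτ : IsStrat2 τ)
    (h : List Q) (hne : h ≠ []) : (∑ q : Q, K G σ τ h q) = 1 := by
  match h with
  | q' :: h =>
    show (∑ q : Q, ∑ a : A, ∑ b : A, σ (q'::h) a * τ (q'::h) a b * G.δ q' a b q) = 1
    rw [Finset.sum_comm]
    have : ∀ a : A, (∑ q : Q, ∑ b : A, σ (q'::h) a * τ (q'::h) a b * G.δ q' a b q)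
        = σ (q'::h) a := by
      intro a
      rw [Finset.sum_comm]
      have : ∀ b : A, (∑ q : Q, σ (q'::h) a * τ (q'::h) a b * G.δ q' a b q)
          = σ (q'::h) a * τ (q'::h) a b := by
        intro b
        rw [← Finset.mul_sum, hG.2 q' a b, mul_one]
      rw [Finset.sum_congr rfl (fun b _ => this b), ← Finset.mul_sum, (hτ (q'::h) a).2, mul_one]
    rw [Finset.sum_congr rfl (fun a _ => this a), (hσ (q'::h)).2]

lemma hprob_nonneg (hG : IsGame G) (hd0 : IsDist d0) (hσ : IsStrat1 σ) (hτ : IsStrat2 τ) :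
    ∀ h : List Q, 0 ≤ hprob G d0 σ τ h
  | [] => zero_le_one
  | [q] => hd0.1 q
  | q :: q' :: h => by
    rw [hprob_cons G d0 σ τ (q'::h) (by simp) q]
    exact mul_nonneg (K_nonneg G σ τ hG hσ hτ _ _)
      (hprob_nonneg hG hd0 hσ hτ (q'::h))

lemma hprob_total (hG : IsGame G) (hd0 : IsDist d0) (hσ : IsStrat1 σ) (hτ : IsStrat2 τ) :
    ∀ i : ℕ, (∑ h : Fin (i+1) → Q, hprob G d0 σ τ (List.ofFn h).reverse) = 1 := by
  intro i
  induction i with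
  | zero =>
    rw [Fintype.sum_equiv (Equiv.funUnique (Fin 1) Q) _ d0 (fun h => by
      show hprob G d0 σ τ (List.ofFn h).reverse = d0 (h 0)
      simp [hprob])]
    exact hd0.2
  | succ i ih =>
    rw [sum_snoc]
    have step : ∀ f : Fin (i+1) → Q, ∀ q : Q,
        hprob G d0 σ τ (List.ofFn (Fin.snoc f q : Fin (i+2) → Q)).reverse
          = K G σ τ (List.ofFn f).reverse q * hprob G d0 σ τ (List.ofFn f).reverse := by
      intro f q
      rw [ofFn_snoc_reverse, hprob_cons G d0 σ τ _ (by simp) q]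
    calc (∑ f : Fin (i+1) → Q, ∑ q : Q,
            hprob G d0 σ τ (List.ofFn (Fin.snoc f q : Fin (i+2) → Q)).reverse)
        = ∑ f : Fin (i+1) → Q, (∑ q : Q, K G σ τ (List.ofFn f).reverse q)
            * hprob G d0 σ τ (List.ofFn f).reverse := by
          refine Finset.sum_congr rfl fun f _ => ?_
          rw [Finset.sum_mul]
          exact Finset.sum_congr rfl fun q _ => step f q
      _ = ∑ f : Fin (i+1) → Q, hprob G d0 σ τ (List.ofFn f).reverse := by
          refine Finset.sum_congr rfl fun f _ => ?_
          rw [K_sum G σ τ hG hσ hτ _ (by simp), one_mul]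
      _ = 1 := ih

section Fix
open OrderHom
variable {Q : Type} [Fintype Q]

lemma iterate_univ_antitone (f : Set Q →o Set Q) (k : ℕ) :
    f^[k+1] Set.univ ⊆ f^[k] Set.univ := by
  induction k with
  | zero => exact Set.subset_univ _
  | succ k ih =>
    simp only [Function.iterate_succ_apply'] at ih ⊢
    exact f.mono ih

lemma gfp_le_iterate_univ (f : Set Q →o Set Q) (k : ℕ) :
    gfp f ≤ f^[k] Set.univ := by
  induction k with
  | zero => exact Set.subset_univ _
  | succ k ih =>
    rw [Function.iterate_succ_apply']
    calc gfp f = f (gfp f) := (f.map_gfp).symm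
      _ ≤ f (f^[k] Set.univ) := f.mono ih

lemma iterate_univ_eq_gfp (f : Set Q →o Set Q) :
    f^[Fintype.card Q] Set.univ = gfp f := by
  have key : ∀ k : ℕ, f^[k] Set.univ = gfp f ∨
      (f^[k] Set.univ).ncard + k ≤ Fintype.card Q := by
    intro k
    induction k with
    | zero => right; simp [Set.ncard_univ]
    | succ k ih =>
      rcases ih with h | h
      · left; rw [Function.iterate_succ_apply', h, f.map_gfp]
      · by_cases he : f^[k+1] Set.univ = f^[k] Set.univ
        · left
          have hfix : f ((⇑f)^[k] Set.univ) = (⇑f)^[k] Set.univ := by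
            simpa only [Function.iterate_succ_apply'] using he
          have h1 : f^[k] Set.univ ≤ gfp f := le_gfp f hfix.ge
          have h2 : gfp f ≤ f^[k] Set.univ := gfp_le_iterate_univ f k
          rw [he]; exact le_antisymm h1 h2
        · right
          have hss : f^[k+1] Set.univ ⊂ f^[k] Set.univ :=
            (iterate_univ_antitone f k).ssubset_of_ne he
          have := Set.ncard_lt_ncard hss (Set.toFinite _)
          omega
  rcases key (Fintype.card Q) with h | h
  · exact h
  · have h0 : (f^[Fintype.card Q] Set.univ).ncard = 0 := by omega
    have he : f^[Fintype.card Q] Set.univ = ∅ :=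
      (Set.ncard_eq_zero (Set.toFinite _)).mp h0
    have := gfp_le_iterate_univ f (Fintype.card Q)
    rw [he] at this ⊢
    exact (Set.subset_empty_iff.mp this).symm

lemma iterate_empty_monotone (f : Set Q →o Set Q) (k : ℕ) :
    f^[k] ∅ ⊆ f^[k+1] ∅ := by
  induction k with
  | zero => exact Set.empty_subset _
  | succ k ih =>
    simp only [Function.iterate_succ_apply'] at ih ⊢
    exact f.mono ih

lemma iterate_empty_le_lfp (f : Set Q →o Set Q) (k : ℕ) :
    f^[k] ∅ ≤ lfp f := by
  induction k with
  | zero => exact Set.empty_subset _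
  | succ k ih =>
    rw [Function.iterate_succ_apply']
    calc f (f^[k] ∅) ≤ f (lfp f) := f.mono ih
      _ = lfp f := f.map_lfp

lemma iterate_empty_eq_lfp (f : Set Q →o Set Q) :
    f^[Fintype.card Q] ∅ = lfp f := by
  have key : ∀ k : ℕ, f^[k] ∅ = lfp f ∨
      k ≤ (f^[k] ∅).ncard := by
    intro k
    induction k with
    | zero => right; omega
    | succ k ih =>
      rcases ih with h | h
      · left; rw [Function.iterate_succ_apply', h, f.map_lfp]
      · by_cases he : f^[k+1] ∅ = f^[k] ∅
        · left
          have hfix : f ((⇑f)^[k] ∅) = (⇑f)^[k] ∅ := by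
            simpa only [Function.iterate_succ_apply'] using he
          have h1 : lfp f ≤ f^[k] ∅ := lfp_le f hfix.le
          have h2 : f^[k] ∅ ≤ lfp f := iterate_empty_le_lfp f k
          rw [he]; exact le_antisymm h2 h1
        · right
          have hss : f^[k] ∅ ⊂ f^[k+1] ∅ :=
            (iterate_empty_monotone f k).ssubset_of_ne (Ne.symm he)
          have := Set.ncard_lt_ncard hss (Set.toFinite _)
          omega
  rcases key (Fintype.card Q) with h | h
  · exact h
  · -- card Q ≤ ncard of a subset of univ forces it to be everything; then it's a fixpoint
    have hcard : (f^[Fintype.card Q] ∅).ncard ≤ Fintype.card Q := by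
      simpa [Set.ncard_univ, Nat.card_eq_fintype_card] using
        Set.ncard_le_ncard (Set.subset_univ (f^[Fintype.card Q] ∅)) (Set.toFinite _)
    have huniv : f^[Fintype.card Q] ∅ = Set.univ := by
      apply Set.eq_of_subset_of_ncard_le (Set.subset_univ _) _ (Set.toFinite _)
      rw [Set.ncard_univ, Nat.card_eq_fintype_card]; omega
    have h2 := iterate_empty_le_lfp f (Fintype.card Q)
    rw [huniv] at h2 ⊢
    exact (Set.univ_subset_iff.mp h2).symm
end Fix

section Win
open OrderHom
attribute [local instance] Classical.propDecidable
variable {Q A : Type} [Fintype Q] [Fintype A]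

def SuppS (G : Game Q A) (q : Q) (a b : A) : Set Q := {q' | 0 < G.δ q a b q'}

def APre (G : Game Q A) (Y X : Set Q) : Set Q :=
  {q | ∃ a : A, ∀ b : A, SuppS G q a b ⊆ Y ∧ (SuppS G q a b ∩ X).Nonempty}

lemma APre_mono (G : Game Q A) {Y Y' X X' : Set Q} (hY : Y ⊆ Y') (hX : X ⊆ X') :
    APre G Y X ⊆ APre G Y' X' := by
  rintro q ⟨a, ha⟩
  exact ⟨a, fun b => ⟨(ha b).1.trans hY,
    (ha b).2.mono (Set.inter_subset_inter_right _ hX)⟩⟩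

def Finn (G : Game Q A) (T : Finset Q) (Y : Set Q) : Set Q →o Set Q :=
  ⟨fun X => ↑T ∪ APre G Y X,
   fun _ _ h => Set.union_subset_union_right _ (APre_mono G le_rfl h)⟩

def Gout (G : Game Q A) (T : Finset Q) : Set Q →o Set Q :=
  ⟨fun Y => lfp (Finn G T Y),
   fun _ _ h => lfp.monotone fun _ =>
     Set.union_subset_union_right _ (APre_mono G h le_rfl)⟩

def Wset (G : Game Q A) (T : Finset Q) : Set Q := gfp (Gout G T)

lemma Wset_eq_lfp (G : Game Q A) (T : Finset Q) :
    lfp (Finn G T (Wset G T)) = Wset G T := (Gout G T).map_gfp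

lemma Wset_unfold (G : Game Q A) (T : Finset Q) :
    ↑T ∪ APre G (Wset G T) (Wset G T) = Wset G T := by
  have h := (Finn G T (Wset G T)).map_lfp
  rw [Wset_eq_lfp] at h
  exact h

lemma T_subset_Wset (G : Game Q A) (T : Finset Q) : ↑T ⊆ Wset G T := by
  rw [← Wset_unfold]; exact Set.subset_union_left

/-! Outer iterates -/
def Yit (G : Game Q A) (T : Finset Q) (k : ℕ) : Set Q := (Gout G T)^[k] Set.univ

lemma Yit_card (G : Game Q A) (T : Finset Q) :
    Yit G T (Fintype.card Q) = Wset G T := iterate_univ_eq_gfp _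

lemma Wset_le_Yit (G : Game Q A) (T : Finset Q) (k : ℕ) : Wset G T ⊆ Yit G T k :=
  gfp_le_iterate_univ _ k

lemma Yit_succ (G : Game Q A) (T : Finset Q) (k : ℕ) :
    Yit G T (k+1) = lfp (Finn G T (Yit G T k)) :=
  Function.iterate_succ_apply' _ _ _

lemma Yit_succ_unfold (G : Game Q A) (T : Finset Q) (k : ℕ) :
    Yit G T (k+1) = ↑T ∪ APre G (Yit G T k) (Yit G T (k+1)) := by
  conv_lhs => rw [Yit_succ]
  rw [← (Finn G T (Yit G T k)).map_lfp, ← Yit_succ]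
  rfl

noncomputable def rankO (G : Game Q A) (T : Finset Q) (q : Q) : ℕ :=
  if h : ∃ k, q ∉ Yit G T (k+1) then Nat.find h else 0

lemma rankO_exists (G : Game Q A) (T : Finset Q) [Nonempty Q] {q : Q}
    (hq : q ∉ Wset G T) : ∃ k, q ∉ Yit G T (k+1) := by
  refine ⟨Fintype.card Q - 1, ?_⟩
  have hc : 1 ≤ Fintype.card Q := Fintype.card_pos
  rw [show Fintype.card Q - 1 + 1 = Fintype.card Q by omega, Yit_card]
  exact hq

lemma rankO_spec (G : Game Q A) (T : Finset Q) [Nonempty Q] {q : Q}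
    (hq : q ∉ Wset G T) : q ∉ Yit G T (rankO G T q + 1) := by
  rw [rankO, dif_pos (rankO_exists G T hq)]
  exact Nat.find_spec (rankO_exists G T hq)

lemma rankO_mem (G : Game Q A) (T : Finset Q) [Nonempty Q] {q : Q}
    (hq : q ∉ Wset G T) : q ∈ Yit G T (rankO G T q) := by
  rw [rankO, dif_pos (rankO_exists G T hq)]
  rcases Nat.eq_zero_or_pos (Nat.find (rankO_exists G T hq)) with h0 | hpos
  · rw [h0]; exact Set.mem_univ q
  · have hm := Nat.find_min (rankO_exists G T hq)
      (Nat.sub_lt hpos one_pos)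
    have heq : Nat.find (rankO_exists G T hq) - 1 + 1 = Nat.find (rankO_exists G T hq) := by omega
    rw [heq] at hm
    exact not_not.mp hm

lemma rankO_le (G : Game Q A) (T : Finset Q) [Nonempty Q] {q : Q}
    (hq : q ∉ Wset G T) : rankO G T q ≤ Fintype.card Q - 1 := by
  rw [rankO, dif_pos (rankO_exists G T hq)]
  exact Nat.find_le (by
    have hc : 1 ≤ Fintype.card Q := Fintype.card_pos
    rw [show Fintype.card Q - 1 + 1 = Fintype.card Q by omega, Yit_card]
    exact hq)

lemma rankO_lt_of_notmem (G : Game Q A) (T : Finset Q) [Nonempty Q] {q : Q} {k : ℕ}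
    (hq : q ∉ Wset G T) (h : q ∉ Yit G T k) : rankO G T q < k := by
  by_contra hle
  push_neg at hle
  -- k ≤ rankO q, so q ∈ Yit k since q ∈ Yit (rankO q) and Yit is antitone
  have mono : ∀ j l : ℕ, j ≤ l → Yit G T l ⊆ Yit G T j := by
    intro j l hjl
    induction l with
    | zero => rw [Nat.le_zero.mp hjl]
    | succ l ih =>
      rcases Nat.lt_or_ge j (l+1) with hlt | hge
      · exact (iterate_univ_antitone (Gout G T) l).trans (ih (by omega))
      · rw [Nat.le_antisymm hjl hge]
  exact h (mono k (rankO G T q) hle (rankO_mem G T hq))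

/-- Main structural fact for states outside the winning set. -/
lemma notW_struct (G : Game Q A) (T : Finset Q) [Nonempty Q] {q : Q}
    (hq : q ∉ Wset G T) :
    q ∉ T ∧ ∀ a : A, ∃ b : A,
      ¬ SuppS G q a b ⊆ Yit G T (rankO G T q) ∨
      SuppS G q a b ∩ Yit G T (rankO G T q + 1) = ∅ := by
  have h := rankO_spec G T hq
  rw [Yit_succ_unfold] at h
  have h2 : q ∉ (↑T : Set Q) ∧ q ∉ APre G (Yit G T (rankO G T q)) (Yit G T (rankO G T q + 1)) := by
    constructor <;> (intro hc; exact h (by simp [Set.mem_union, hc]))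
  obtain ⟨hT, hA⟩ := h2
  refine ⟨by simpa using hT, fun a => ?_⟩
  have : ¬ ∀ b : A, SuppS G q a b ⊆ Yit G T (rankO G T q) ∧
      (SuppS G q a b ∩ Yit G T (rankO G T q + 1)).Nonempty := fun hc => hA ⟨a, hc⟩
  push_neg at this
  obtain ⟨b, hb⟩ := this
  refine ⟨b, ?_⟩
  by_cases hs : SuppS G q a b ⊆ Yit G T (rankO G T q)
  · exact Or.inr (hb hs)
  · exact Or.inl hs

/-! Inner iterates (w.r.t. the winning set) -/
def Xit (G : Game Q A) (T : Finset Q) (k : ℕ) : Set Q := (Finn G T (Wset G T))^[k] ∅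

lemma Xit_card (G : Game Q A) (T : Finset Q) :
    Xit G T (Fintype.card Q) = Wset G T := by
  rw [Xit, iterate_empty_eq_lfp, Wset_eq_lfp]

lemma Xit_succ (G : Game Q A) (T : Finset Q) (k : ℕ) :
    Xit G T (k+1) = ↑T ∪ APre G (Wset G T) (Xit G T k) :=
  Function.iterate_succ_apply' _ _ _

noncomputable def rankI (G : Game Q A) (T : Finset Q) (q : Q) : ℕ :=
  if h : ∃ k, q ∈ Xit G T k then Nat.find h else 0

lemma rankI_exists (G : Game Q A) (T : Finset Q) {q : Q}
    (hq : q ∈ Wset G T) : ∃ k, q ∈ Xit G T k := ⟨Fintype.card Q, by rw [Xit_card]; exact hq⟩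

lemma rankI_spec (G : Game Q A) (T : Finset Q) {q : Q}
    (hq : q ∈ Wset G T) : q ∈ Xit G T (rankI G T q) := by
  rw [rankI, dif_pos (rankI_exists G T hq)]
  exact Nat.find_spec (rankI_exists G T hq)

lemma rankI_le (G : Game Q A) (T : Finset Q) {q : Q}
    (hq : q ∈ Wset G T) : rankI G T q ≤ Fintype.card Q := by
  rw [rankI, dif_pos (rankI_exists G T hq)]
  exact Nat.find_le (by rw [Xit_card]; exact hq)

lemma rankI_le_of_mem (G : Game Q A) (T : Finset Q) {q : Q} {k : ℕ}
    (hq : q ∈ Wset G T) (h : q ∈ Xit G T k) : rankI G T q ≤ k := by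
  rw [rankI, dif_pos (rankI_exists G T hq)]
  exact Nat.find_le h

lemma rankI_pos (G : Game Q A) (T : Finset Q) {q : Q}
    (hq : q ∈ Wset G T) : 1 ≤ rankI G T q := by
  by_contra h
  have h0 : rankI G T q = 0 := by omega
  have := rankI_spec G T hq
  rw [h0] at this
  exact this

/-- Main structural fact for states inside the winning set, outside the target. -/
lemma W_struct (G : Game Q A) (T : Finset Q) {q : Q}
    (hq : q ∈ Wset G T) (hT : q ∉ T) :
    ∃ a : A, ∀ b : A, SuppS G q a b ⊆ Wset G T ∧
      (SuppS G q a b ∩ Xit G T (rankI G T q - 1)).Nonempty := by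
  have h1 := rankI_pos G T hq
  have h := rankI_spec G T hq
  rw [show rankI G T q = (rankI G T q - 1) + 1 by omega, Xit_succ] at h
  rcases h with h | h
  · exact absurd (by simpa using h) hT
  · exact h

end Win

section PartB
attribute [local instance] Classical.propDecidable
variable {Q A : Type} [Fintype Q] [Fintype A]

lemma rev_ofFn_cons {Q : Type} {k : ℕ} (f : Fin (k+1) → Q) :
    (List.ofFn f).reverse = f (Fin.last k) :: (List.ofFn fun j : Fin k => f j.castSucc).reverse := by
  rw [List.ofFn_succ' f]
  simp [List.concat_eq_append]

noncomputable def wB (G : Game Q A) (T : Finset Q) (η : ℝ) (q : Q) : ℝ :=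
  if q ∈ Wset G T then 0 else η ^ rankO G T q

lemma wB_nonneg (G : Game Q A) (T : Finset Q) {η : ℝ} (hη : 0 ≤ η) (q : Q) :
    0 ≤ wB G T η q := by
  unfold wB; split
  · exact le_refl 0
  · exact pow_nonneg hη _

lemma wB_le_one (G : Game Q A) (T : Finset Q) {η : ℝ} (hη : 0 ≤ η) (hη1 : η ≤ 1) (q : Q) :
    wB G T η q ≤ 1 := by
  unfold wB; split
  · exact zero_le_one
  · exact pow_le_one₀ hη hη1

lemma wB_T_eq_zero (G : Game Q A) (T : Finset Q) (η : ℝ) {q : Q} (hq : q ∈ T) :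
    wB G T η q = 0 := by
  unfold wB
  rw [if_pos (T_subset_Wset G T (by simpa using hq))]

noncomputable def pickB (G : Game Q A) (T : Finset Q) [Nonempty A] (q : Q) (a : A) : A :=
  if h : ∃ b, ¬ SuppS G q a b ⊆ Yit G T (rankO G T q) ∨
      SuppS G q a b ∩ Yit G T (rankO G T q + 1) = ∅
  then h.choose else Classical.arbitrary A

lemma pickB_spec (G : Game Q A) (T : Finset Q) [Nonempty A] [Nonempty Q] {q : Q}
    (hq : q ∉ Wset G T) (a : A) :
    ¬ SuppS G q a (pickB G T q a) ⊆ Yit G T (rankO G T q) ∨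
      SuppS G q a (pickB G T q a) ∩ Yit G T (rankO G T q + 1) = ∅ := by
  have h := (notW_struct G T hq).2 a
  rw [pickB, dif_pos h]
  exact h.choose_spec

noncomputable def pickB' (G : Game Q A) (T : Finset Q) [Nonempty A] :
    Option Q → A → A
  | none, _ => Classical.arbitrary A
  | some q, a => pickB G T q a

noncomputable def τB (G : Game Q A) (T : Finset Q) [Nonempty A] : Strat2 Q A :=
  fun h a b => if b = pickB' G T h.head? a then 1 else 0

lemma τB_isStrat (G : Game Q A) (T : Finset Q) [Nonempty A] : IsStrat2 (τB G T) := by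
  intro h a
  constructor
  · intro b; unfold τB; split <;> norm_num
  · unfold τB
    rw [Finset.sum_ite_eq' Finset.univ (pickB' G T h.head? a) (fun _ => (1:ℝ))]
    simp

lemma τB_memoryless (G : Game Q A) (T : Finset Q) [Nonempty A] : Memoryless2 (τB G T) := by
  intro h h' a hh
  funext b
  unfold τB
  rw [hh]

/-- Key one-step inequality for the spoiler. -/
lemma stepB (G : Game Q A) (T : Finset Q) [Nonempty A] [Nonempty Q]
    (hG : IsGame G) {η : ℝ} (hη : 0 < η) (hη1 : η ≤ 1)
    (hηmin : ∀ q a b q', 0 < G.δ q a b q' → η ≤ G.δ q a b q')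
    {q : Q} (hq : q ∉ Wset G T) (a : A) :
    wB G T η q ≤ ∑ q' : Q, G.δ q a (pickB G T q a) q' * wB G T η q' := by
  set b := pickB G T q a with hb
  set r := rankO G T q with hr
  have hwq : wB G T η q = η ^ r := if_neg hq
  rcases pickB_spec G T hq a with hcase | hcase
  · -- some successor escapes Yit r, it has strictly smaller rank
    rw [Set.not_subset] at hcase
    obtain ⟨q', hq'supp, hq'notin⟩ := hcase
    have hδpos : 0 < G.δ q a b q' := hq'supp
    have hq'notW : q' ∉ Wset G T := fun hc => hq'notin (Wset_le_Yit G T r hc)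
    have hrlt : rankO G T q' < r := rankO_lt_of_notmem G T hq'notW hq'notin
    have hwq' : wB G T η q' = η ^ rankO G T q' := if_neg hq'notW
    have h1 : η ^ r ≤ G.δ q a b q' * wB G T η q' := by
      rw [hwq']
      calc η ^ r = η * η ^ (r - 1) := by
            rw [← pow_succ']
            congr 1
            omega
        _ ≤ G.δ q a b q' * η ^ rankO G T q' := by
            exact mul_le_mul (hηmin _ _ _ _ hδpos)
              (pow_le_pow_of_le_one hη.le hη1 (by omega))
              (pow_nonneg hη.le _) (hG.1 q a b q')
    rw [hwq]
    refine h1.trans (Finset.single_le_sum (f := fun q' => G.δ q a b q' * wB G T η q')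
      (fun q' _ => mul_nonneg (hG.1 _ _ _ _) (wB_nonneg G T hη.le q')) (Finset.mem_univ q'))
  · -- all successors stay outside Yit (r+1), so all have rank ≤ r
    have hall : ∀ q', 0 < G.δ q a b q' → η ^ r ≤ wB G T η q' := by
      intro q' hδ
      have hnotin : q' ∉ Yit G T (r + 1) := by
        intro hc
        have hmem : q' ∈ SuppS G q a b ∩ Yit G T (r+1) := ⟨hδ, hc⟩
        rw [hcase] at hmem
        exact hmem
      have hq'notW : q' ∉ Wset G T := fun hc => hnotin (Wset_le_Yit G T (r+1) hc)
      have : rankO G T q' < r + 1 := rankO_lt_of_notmem G T hq'notW hnotin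
      unfold wB
      rw [if_neg hq'notW]
      exact pow_le_pow_of_le_one hη.le hη1 (by omega)
    calc wB G T η q = η ^ r * 1 := by rw [hwq, mul_one]
      _ = ∑ q' : Q, G.δ q a b q' * η ^ r := by
          rw [← Finset.sum_mul, hG.2 q a b]; ring
      _ ≤ ∑ q' : Q, G.δ q a b q' * wB G T η q' := by
          refine Finset.sum_le_sum fun q' _ => ?_
          rcases lt_or_eq_of_le (hG.1 q a b q') with hδ | hδ
          · exact mul_le_mul_of_nonneg_left (hall q' hδ) (hG.1 _ _ _ _)
          · rw [← hδ, zero_mul, zero_mul]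

end PartB

section PartB2
attribute [local instance] Classical.propDecidable
variable {Q A : Type} [Fintype Q] [Fintype A]

noncomputable def avoidProb (G : Game Q A) (d0 : Q → ℝ) (σ : Strat1 Q A) (τ : Strat2 Q A)
    (T : Finset Q) (i : ℕ) : ℝ :=
  ∑ h : Fin (i+1) → Q, if ∃ j, h j ∈ T then 0 else hprob G d0 σ τ (List.ofFn h).reverse

lemma reach_add_avoid (G : Game Q A) (d0 : Q → ℝ) (σ : Strat1 Q A) (τ : Strat2 Q A)
    (T : Finset Q) (hG : IsGame G) (hd0 : IsDist d0) (hσ : IsStrat1 σ) (hτ : IsStrat2 τ)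
    (i : ℕ) : reachProb G d0 σ τ T i + avoidProb G d0 σ τ T i = 1 := by
  rw [reachProb, avoidProb, ← Finset.sum_add_distrib]
  rw [show (∑ h : Fin (i+1) → Q,
      ((if ∃ j, h j ∈ T then hprob G d0 σ τ (List.ofFn h).reverse else 0) +
       (if ∃ j, h j ∈ T then 0 else hprob G d0 σ τ (List.ofFn h).reverse)))
      = ∑ h : Fin (i+1) → Q, hprob G d0 σ τ (List.ofFn h).reverse from
    Finset.sum_congr rfl fun h _ => by split <;> ring]
  exact hprob_total G d0 σ τ hG hd0 hσ hτ i

noncomputable def PhiB (G : Game Q A) (d0 : Q → ℝ) (σ : Strat1 Q A) (T : Finset Q)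
    [Nonempty A] (η : ℝ) (i : ℕ) : ℝ :=
  ∑ h : Fin (i+1) → Q, if ∃ j, h j ∈ T then 0 else
    hprob G d0 σ (τB G T) (List.ofFn h).reverse * wB G T η (h (Fin.last i))

lemma K_τB (G : Game Q A) (T : Finset Q) [Nonempty A] (σ : Strat1 Q A)
    (q' : Q) (t : List Q) (q : Q) :
    K G σ (τB G T) (q' :: t) q
      = ∑ a : A, σ (q' :: t) a * G.δ q' a (pickB G T q' a) q := by
  show (∑ a : A, ∑ b : A, σ (q'::t) a * τB G T (q'::t) a b * G.δ q' a b q) = _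
  refine Finset.sum_congr rfl fun a _ => ?_
  have hterm : ∀ b : A, σ (q'::t) a * τB G T (q'::t) a b * G.δ q' a b q
      = if b = pickB G T q' a then σ (q'::t) a * G.δ q' a b q else 0 := by
    intro b
    unfold τB pickB'
    simp only [List.head?]
    split
    · simp [*]
    · simp [*]
  rw [Finset.sum_congr rfl fun b _ => hterm b,
    Finset.sum_ite_eq' Finset.univ (pickB G T q' a) (fun b => σ (q'::t) a * G.δ q' a b q)]
  simp

lemma PhiB_mono (G : Game Q A) (d0 : Q → ℝ) (σ : Strat1 Q A) (T : Finset Q)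
    [Nonempty A] [Nonempty Q] (hG : IsGame G) (hd0 : IsDist d0) (hσ : IsStrat1 σ)
    {η : ℝ} (hη : 0 < η) (hη1 : η ≤ 1)
    (hηmin : ∀ q a b q', 0 < G.δ q a b q' → η ≤ G.δ q a b q') (i : ℕ) :
    PhiB G d0 σ T η i ≤ PhiB G d0 σ T η (i+1) := by
  have hτ := τB_isStrat G T
  rw [PhiB, PhiB, sum_snoc (k := i+1)]
  refine Finset.sum_le_sum fun f _ => ?_
  by_cases hf : ∃ j, f j ∈ T
  · rw [if_pos hf]
    refine Finset.sum_nonneg fun q _ => ?_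
    rw [if_pos ((exists_snoc_iff f q T).mpr (Or.inl hf))]
  · rw [if_neg hf]
    have hrw : ∀ q : Q,
        (if ∃ j, (Fin.snoc f q : Fin (i+2) → Q) j ∈ T then 0 else
          hprob G d0 σ (τB G T) (List.ofFn (Fin.snoc f q : Fin (i+2) → Q)).reverse *
            wB G T η ((Fin.snoc f q : Fin (i+2) → Q) (Fin.last (i+1))))
        = K G σ (τB G T) (List.ofFn f).reverse q * hprob G d0 σ (τB G T) (List.ofFn f).reverse
            * wB G T η q := by
      intro q
      rw [show ((Fin.snoc f q : Fin (i+2) → Q) (Fin.last (i+1))) = q by simp]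
      by_cases hqT : q ∈ T
      · rw [if_pos ((exists_snoc_iff f q T).mpr (Or.inr hqT)), wB_T_eq_zero G T η hqT,
          mul_zero]
      · rw [if_neg (fun hc => by
          rcases (exists_snoc_iff f q T).mp hc with h | h
          · exact hf h
          · exact hqT h)]
        rw [ofFn_snoc_reverse, hprob_cons G d0 σ (τB G T) _ (by simp) q]
    rw [Finset.sum_congr rfl fun q _ => hrw q]
    have hrev := rev_ofFn_cons f
    have hKval : ∀ q : Q, K G σ (τB G T) (List.ofFn f).reverse q
        = ∑ a : A, σ ((List.ofFn f).reverse) a *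
            G.δ (f (Fin.last i)) a (pickB G T (f (Fin.last i)) a) q := by
      intro q
      rw [hrev, K_τB]
    have inner : ∀ a : A, wB G T η (f (Fin.last i)) ≤
        ∑ q : Q, G.δ (f (Fin.last i)) a (pickB G T (f (Fin.last i)) a) q * wB G T η q := by
      intro a
      by_cases hW : f (Fin.last i) ∈ Wset G T
      · rw [wB, if_pos hW]
        exact Finset.sum_nonneg fun q _ => mul_nonneg (hG.1 _ _ _ _) (wB_nonneg G T hη.le q)
      · exact stepB G T hG hη hη1 hηmin hW a
    have key : wB G T η (f (Fin.last i))
        ≤ ∑ q : Q, K G σ (τB G T) (List.ofFn f).reverse q * wB G T η q := by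
      have h1 : (∑ q : Q, K G σ (τB G T) (List.ofFn f).reverse q * wB G T η q)
          = ∑ a : A, σ ((List.ofFn f).reverse) a *
              ∑ q : Q, G.δ (f (Fin.last i)) a (pickB G T (f (Fin.last i)) a) q
                * wB G T η q := by
        rw [Finset.sum_congr rfl fun q _ => by rw [hKval q, Finset.sum_mul]]
        rw [Finset.sum_comm]
        refine Finset.sum_congr rfl fun a _ => ?_
        rw [Finset.mul_sum]
        exact Finset.sum_congr rfl fun q _ => by ring
      rw [h1]
      calc wB G T η (f (Fin.last i))
          = ∑ a : A, σ ((List.ofFn f).reverse) a * wB G T η (f (Fin.last i)) := by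
            rw [← Finset.sum_mul, (hσ _).2, one_mul]
        _ ≤ _ := Finset.sum_le_sum fun a _ =>
            mul_le_mul_of_nonneg_left (inner a) ((hσ _).1 a)
    have hp := hprob_nonneg G d0 σ (τB G T) hG hd0 hσ hτ (List.ofFn f).reverse
    calc hprob G d0 σ (τB G T) (List.ofFn f).reverse * wB G T η (f (Fin.last i))
        ≤ hprob G d0 σ (τB G T) (List.ofFn f).reverse *
            ∑ q : Q, K G σ (τB G T) (List.ofFn f).reverse q * wB G T η q :=
          mul_le_mul_of_nonneg_left key hp
      _ = ∑ q : Q, K G σ (τB G T) (List.ofFn f).reverse q *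
            hprob G d0 σ (τB G T) (List.ofFn f).reverse * wB G T η q := by
          rw [Finset.mul_sum]
          exact Finset.sum_congr rfl fun q _ => by ring

lemma PhiB_le_avoid (G : Game Q A) (d0 : Q → ℝ) (σ : Strat1 Q A) (T : Finset Q)
    [Nonempty A] (hG : IsGame G) (hd0 : IsDist d0) (hσ : IsStrat1 σ)
    {η : ℝ} (hη : 0 < η) (hη1 : η ≤ 1) (i : ℕ) :
    PhiB G d0 σ T η i ≤ avoidProb G d0 σ (τB G T) T i := by
  have hτ := τB_isStrat G T
  refine Finset.sum_le_sum fun h _ => ?_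
  split
  · exact le_refl 0
  · calc hprob G d0 σ (τB G T) (List.ofFn h).reverse * wB G T η (h (Fin.last i))
        ≤ hprob G d0 σ (τB G T) (List.ofFn h).reverse * 1 :=
          mul_le_mul_of_nonneg_left (wB_le_one G T hη.le hη1 _)
            (hprob_nonneg G d0 σ (τB G T) hG hd0 hσ hτ _)
      _ = _ := mul_one _

lemma PhiB_zero (G : Game Q A) (d0 : Q → ℝ) (σ : Strat1 Q A) (T : Finset Q)
    [Nonempty A] [Nonempty Q] (hG : IsGame G) (hd0 : IsDist d0) (hσ : IsStrat1 σ)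
    {η : ℝ} (hη : 0 < η) {q0 : Q} (hq0pos : 0 < d0 q0) (hq0 : q0 ∉ Wset G T) :
    d0 q0 * η ^ rankO G T q0 ≤ PhiB G d0 σ T η 0 := by
  have hτ := τB_isStrat G T
  have hq0T : q0 ∉ T := fun hc => hq0 (T_subset_Wset G T (by simpa using hc))
  rw [PhiB]
  have hterm : (if ∃ j : Fin 1, (fun _ => q0 : Fin 1 → Q) j ∈ T then (0:ℝ) else
      hprob G d0 σ (τB G T) (List.ofFn (fun _ : Fin 1 => q0)).reverse *
        wB G T η ((fun _ : Fin 1 => q0) (Fin.last 0))) = d0 q0 * η ^ rankO G T q0 := by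
    rw [if_neg (by rintro ⟨j, hj⟩; exact hq0T hj)]
    have hl : (List.ofFn (fun _ : Fin 1 => q0)).reverse = [q0] := by simp
    rw [hl]
    show d0 q0 * wB G T η q0 = _
    rw [wB, if_neg hq0]
  rw [← hterm]
  refine Finset.single_le_sum
    (f := fun h : Fin 1 → Q => if ∃ j, h j ∈ T then (0:ℝ) else
      hprob G d0 σ (τB G T) (List.ofFn h).reverse * wB G T η (h (Fin.last 0)))
    (fun h _ => ?_) (Finset.mem_univ (fun _ : Fin 1 => q0))
  split
  · exact le_refl 0
  · exact mul_nonneg (hprob_nonneg G d0 σ (τB G T) hG hd0 hσ hτ _)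
      (wB_nonneg G T hη.le _)

/-- Part B main bound. -/
lemma partB_main (G : Game Q A) (d0 : Q → ℝ) (T : Finset Q)
    [Nonempty A] [Nonempty Q] (hG : IsGame G) (hd0 : IsDist d0)
    {η η0 : ℝ} (hη : 0 < η) (hη1 : η ≤ 1)
    (hηmin : ∀ q a b q', 0 < G.δ q a b q' → η ≤ G.δ q a b q')
    (hη0 : 0 < η0) (hη0min : ∀ q, 0 < d0 q → η0 ≤ d0 q)
    {q0 : Q} (hq0pos : 0 < d0 q0) (hq0 : q0 ∉ Wset G T) :
    ∀ σ, IsStrat1 σ → ∀ i : ℕ,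
      reachProb G d0 σ (τB G T) T i ≤ 1 - η0 * η ^ (Fintype.card Q) := by
  intro σ hσ i
  have hτ := τB_isStrat G T
  have hPhi0 : η0 * η ^ (Fintype.card Q) ≤ PhiB G d0 σ T η 0 := by
    refine le_trans ?_ (PhiB_zero G d0 σ T hG hd0 hσ hη hq0pos hq0)
    have h1 : η ^ (Fintype.card Q) ≤ η ^ rankO G T q0 :=
      pow_le_pow_of_le_one hη.le hη1 ((rankO_le G T hq0).trans (Nat.sub_le _ _))
    exact mul_le_mul (hη0min q0 hq0pos) h1 (pow_nonneg hη.le _) (hd0.1 q0)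
  have hPhii : PhiB G d0 σ T η 0 ≤ PhiB G d0 σ T η i := by
    induction i with
    | zero => exact le_refl _
    | succ i ih => exact ih.trans (PhiB_mono G d0 σ T hG hd0 hσ hη hη1 hηmin i)
  have havoid : η0 * η ^ (Fintype.card Q) ≤ avoidProb G d0 σ (τB G T) T i :=
    (hPhi0.trans hPhii).trans (PhiB_le_avoid G d0 σ T hG hd0 hσ hη hη1 i)
  have htot := reach_add_avoid G d0 σ (τB G T) T hG hd0 hσ hτ i
  linarith

end PartB2

section PartC
attribute [local instance] Classical.propDecidable
variable {Q A : Type} [Fintype Q] [Fintype A]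

noncomputable def pickA (G : Game Q A) (T : Finset Q) [Nonempty A] (q : Q) : A :=
  if h : ∃ a, ∀ b, SuppS G q a b ⊆ Wset G T ∧
      (SuppS G q a b ∩ Xit G T (rankI G T q - 1)).Nonempty
  then h.choose else Classical.arbitrary A

lemma pickA_spec (G : Game Q A) (T : Finset Q) [Nonempty A] {q : Q}
    (hq : q ∈ Wset G T) (hT : q ∉ T) :
    ∀ b, SuppS G q (pickA G T q) b ⊆ Wset G T ∧
      (SuppS G q (pickA G T q) b ∩ Xit G T (rankI G T q - 1)).Nonempty := by
  have h := W_struct G T hq hT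
  rw [pickA, dif_pos h]
  exact h.choose_spec

noncomputable def pickA' (G : Game Q A) (T : Finset Q) [Nonempty A] : Option Q → A
  | none => Classical.arbitrary A
  | some q => pickA G T q

noncomputable def σW (G : Game Q A) (T : Finset Q) [Nonempty A] : Strat1 Q A :=
  fun h a => if a = pickA' G T h.head? then 1 else 0

lemma σW_isStrat (G : Game Q A) (T : Finset Q) [Nonempty A] : IsStrat1 (σW G T) := by
  intro h
  constructor
  · intro a; unfold σW; split <;> norm_num
  · unfold σW
    rw [Finset.sum_ite_eq' Finset.univ (pickA' G T h.head?) (fun _ => (1:ℝ))]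
    simp

lemma K_σW (G : Game Q A) (T : Finset Q) [Nonempty A] (τ : Strat2 Q A)
    (q' : Q) (t : List Q) (q : Q) :
    K G (σW G T) τ (q' :: t) q
      = ∑ b : A, τ (q' :: t) (pickA G T q') b * G.δ q' (pickA G T q') b q := by
  show (∑ a : A, ∑ b : A, σW G T (q'::t) a * τ (q'::t) a b * G.δ q' a b q) = _
  have hterm : ∀ a b, σW G T (q'::t) a * τ (q'::t) a b * G.δ q' a b q
      = if a = pickA G T q' then τ (q'::t) a b * G.δ q' a b q else 0 := by
    intro a b
    unfold σW pickA'
    simp only [List.head?]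
    split <;> simp [*]
  calc (∑ a : A, ∑ b : A, σW G T (q'::t) a * τ (q'::t) a b * G.δ q' a b q)
      = ∑ a : A, if a = pickA G T q' then ∑ b : A, τ (q'::t) a b * G.δ q' a b q else 0 := by
        refine Finset.sum_congr rfl fun a _ => ?_
        rw [Finset.sum_congr rfl fun b _ => hterm a b]
        by_cases ha : a = pickA G T q'
        · rw [if_pos ha]
          exact Finset.sum_congr rfl fun b _ => if_pos ha
        · rw [if_neg ha]
          exact Finset.sum_eq_zero fun b _ => if_neg ha
    _ = _ := by
        rw [Finset.sum_ite_eq' Finset.univ (pickA G T q')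
          (fun a => ∑ b : A, τ (q'::t) a b * G.δ q' a b q)]
        simp

/-- Continuation probability of avoiding `T` for `m` more steps after history `h`. -/
noncomputable def AC (G : Game Q A) (T : Finset Q) [Nonempty A] (τ : Strat2 Q A) :
    List Q → ℕ → ℝ
  | _, 0 => 1
  | h, (m+1) => ∑ q : Q, if q ∈ T then 0 else
      K G (σW G T) τ h q * AC G T τ (q :: h) m

lemma AC_nonneg (G : Game Q A) (T : Finset Q) [Nonempty A] (τ : Strat2 Q A)
    (hG : IsGame G) (hτ : IsStrat2 τ) :
    ∀ (m : ℕ) (h : List Q), 0 ≤ AC G T τ h m := by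
  intro m
  induction m with
  | zero => intro h; exact zero_le_one
  | succ m ih =>
    intro h
    refine Finset.sum_nonneg fun q _ => ?_
    split
    · exact le_refl 0
    · exact mul_nonneg (K_nonneg G (σW G T) τ hG (σW_isStrat G T) hτ h q) (ih _)

lemma AC_le_one (G : Game Q A) (T : Finset Q) [Nonempty A] (τ : Strat2 Q A)
    (hG : IsGame G) (hτ : IsStrat2 τ) :
    ∀ (m : ℕ) (h : List Q), h ≠ [] → AC G T τ h m ≤ 1 := by
  intro m
  induction m with
  | zero => intro h _; exact le_refl 1
  | succ m ih =>
    intro h hne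
    calc AC G T τ h (m+1)
        ≤ ∑ q : Q, K G (σW G T) τ h q := by
          refine Finset.sum_le_sum fun q _ => ?_
          have hK := K_nonneg G (σW G T) τ hG (σW_isStrat G T) hτ h q
          split
          · exact hK
          · calc K G (σW G T) τ h q * AC G T τ (q::h) m
                ≤ K G (σW G T) τ h q * 1 :=
                  mul_le_mul_of_nonneg_left (ih (q::h) (by simp)) hK
              _ = _ := mul_one _
      _ = 1 := K_sum G (σW G T) τ hG (σW_isStrat G T) hτ h hne

/-- The contraction claim: from a state in the winning set of inner rank at most `k+1`,
the probability of avoiding `T` for `m ≥ k` more steps is at most `1 - η^k`. -/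
lemma AC_contract (G : Game Q A) (T : Finset Q) [Nonempty A] (τ : Strat2 Q A)
    (hG : IsGame G) (hτ : IsStrat2 τ) {η : ℝ} (hη : 0 < η) (hη1 : η ≤ 1)
    (hηmin : ∀ q a b q', 0 < G.δ q a b q' → η ≤ G.δ q a b q') :
    ∀ (k m : ℕ) (t : List Q) (q' : Q), q' ∈ Wset G T → q' ∉ T →
      rankI G T q' ≤ k + 1 → k ≤ m →
      AC G T τ (q' :: t) m ≤ 1 - η ^ k := by
  intro k
  induction k with
  | zero =>
    intro m t q' hW hT hrk _
    exfalso
    have h1 : rankI G T q' = 1 := le_antisymm hrk (rankI_pos G T hW)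
    have h2 := rankI_spec G T hW
    rw [h1, Xit_succ] at h2
    rcases h2 with h2 | h2
    · exact hT (by simpa using h2)
    · obtain ⟨a, ha⟩ := h2
      obtain ⟨x, hx⟩ := (ha (Classical.arbitrary A)).2
      exact hx.2
  | succ k ih =>
    intro m t q' hW hT hrk hm
    obtain ⟨m', rfl⟩ : ∃ m', m = m' + 1 := ⟨m - 1, by omega⟩
    have hm' : k ≤ m' := by omega
    set a := pickA G T q' with ha
    have hspec := pickA_spec G T hW hT
    -- rewrite AC step using K_σW
    have hstep : AC G T τ (q' :: t) (m' + 1)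
        = ∑ b : A, τ (q' :: t) a b *
            ∑ q : Q, (if q ∈ T then 0 else G.δ q' a b q * AC G T τ (q :: q' :: t) m') := by
      have h1 : ∀ q : Q, (if q ∈ T then (0:ℝ) else
          K G (σW G T) τ (q'::t) q * AC G T τ (q::q'::t) m')
          = ∑ b : A, (if q ∈ T then 0 else
              τ (q'::t) a b * G.δ q' a b q * AC G T τ (q::q'::t) m') := by
        intro q
        by_cases hq : q ∈ T
        · rw [if_pos hq]
          exact (Finset.sum_eq_zero fun b _ => if_pos hq).symm
        · rw [if_neg hq, K_σW, Finset.sum_mul]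
          refine Finset.sum_congr rfl fun b _ => ?_
          rw [if_neg hq, ha]
      show (∑ q : Q, if q ∈ T then 0 else
          K G (σW G T) τ (q' :: t) q * AC G T τ (q :: q' :: t) m') = _
      rw [Finset.sum_congr rfl fun q _ => h1 q, Finset.sum_comm]
      refine Finset.sum_congr rfl fun b _ => ?_
      rw [Finset.mul_sum]
      refine Finset.sum_congr rfl fun q _ => ?_
      by_cases hq : q ∈ T
      · rw [if_pos hq, if_pos hq, mul_zero]
      · rw [if_neg hq, if_neg hq]; ring
    rw [hstep]
    -- bound each inner sum by 1 - η^(k+1)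
    have hinner : ∀ b : A,
        (∑ q : Q, (if q ∈ T then 0 else G.δ q' a b q * AC G T τ (q :: q' :: t) m'))
          ≤ 1 - η ^ (k + 1) := by
      intro b
      obtain ⟨qs, hqs⟩ := (hspec b).2
      have hδpos : 0 < G.δ q' a b qs := hqs.1
      have hδη : η ≤ G.δ q' a b qs := hηmin _ _ _ _ hδpos
      have hsum1 : (∑ q : Q, (if q ∈ T then 0 else G.δ q' a b q)) ≤ 1 := by
        calc (∑ q : Q, (if q ∈ T then 0 else G.δ q' a b q))
            ≤ ∑ q : Q, G.δ q' a b q := by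
              refine Finset.sum_le_sum fun q _ => ?_
              split
              · exact hG.1 _ _ _ _
              · exact le_refl _
          _ = 1 := hG.2 q' a b
      by_cases hqsT : qs ∈ T
      · -- the witness is in the target: its mass is lost entirely
        have hdrop : (∑ q : Q, (if q ∈ T then 0 else G.δ q' a b q * AC G T τ (q :: q' :: t) m'))
            + G.δ q' a b qs ≤ 1 := by
          have : (∑ q : Q, (if q ∈ T then 0 else G.δ q' a b q * AC G T τ (q :: q' :: t) m'))
              + G.δ q' a b qs
              = ∑ q : Q, ((if q ∈ T then 0 else G.δ q' a b q * AC G T τ (q :: q' :: t) m')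
                  + (if q = qs then G.δ q' a b q else 0)) := by
            rw [Finset.sum_add_distrib,
              Finset.sum_ite_eq' Finset.univ qs (fun q => G.δ q' a b q)]
            simp
          rw [this]
          calc _ ≤ ∑ q : Q, G.δ q' a b q := by
                refine Finset.sum_le_sum fun q _ => ?_
                by_cases hq : q = qs
                · subst hq
                  rw [if_pos hqsT, if_pos rfl, zero_add]
                · rw [if_neg hq, add_zero]
                  split
                  · exact hG.1 _ _ _ _
                  · calc G.δ q' a b q * AC G T τ (q :: q' :: t) m'
                        ≤ G.δ q' a b q * 1 := mul_le_mul_of_nonneg_left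
                          (AC_le_one G T τ hG hτ m' _ (by simp)) (hG.1 _ _ _ _)
                      _ = _ := mul_one _
            _ = 1 := hG.2 q' a b
        have hηk : η ^ (k+1) ≤ η := by
          calc η ^ (k+1) ≤ η ^ 1 := pow_le_pow_of_le_one hη.le hη1 (by omega)
            _ = η := pow_one η
        linarith
      · -- the witness avoids the target: use the induction hypothesis on it
        have hqsW : qs ∈ Wset G T := (hspec b).1 hqs.1
        have hqsrk : rankI G T qs ≤ k + 1 := by
          have h1 := rankI_le_of_mem G T hqsW hqs.2
          have h2 := rankI_pos G T hW
          have h3 : rankI G T q' - 1 ≤ k + 1 := by omega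
          omega
        have hIH := ih m' (q' :: t) qs hqsW hqsT hqsrk hm'
        have hkey : (∑ q : Q, (if q ∈ T then 0 else G.δ q' a b q * AC G T τ (q :: q' :: t) m'))
            + G.δ q' a b qs * η ^ k ≤ 1 := by
          have heq : (∑ q : Q, (if q ∈ T then 0 else G.δ q' a b q * AC G T τ (q :: q' :: t) m'))
              + G.δ q' a b qs * η ^ k
              = ∑ q : Q, ((if q ∈ T then 0 else G.δ q' a b q * AC G T τ (q :: q' :: t) m')
                  + (if q = qs then G.δ q' a b q * η ^ k else 0)) := by
            rw [Finset.sum_add_distrib,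
              Finset.sum_ite_eq' Finset.univ qs (fun q => G.δ q' a b q * η ^ k)]
            simp
          rw [heq]
          calc _ ≤ ∑ q : Q, G.δ q' a b q := by
                refine Finset.sum_le_sum fun q _ => ?_
                by_cases hq : q = qs
                · subst hq
                  rw [if_neg hqsT, if_pos rfl]
                  calc G.δ q' a b q * AC G T τ (q :: q' :: t) m' + G.δ q' a b q * η ^ k
                      ≤ G.δ q' a b q * (1 - η ^ k) + G.δ q' a b q * η ^ k := by
                        have := mul_le_mul_of_nonneg_left hIH (hG.1 q' a b q)
                        linarith
                    _ = G.δ q' a b q := by ring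
                · rw [if_neg hq, add_zero]
                  split
                  · exact hG.1 _ _ _ _
                  · calc G.δ q' a b q * AC G T τ (q :: q' :: t) m'
                        ≤ G.δ q' a b q * 1 := mul_le_mul_of_nonneg_left
                          (AC_le_one G T τ hG hτ m' _ (by simp)) (hG.1 _ _ _ _)
                      _ = _ := mul_one _
            _ = 1 := hG.2 q' a b
        have hηk : η ^ (k+1) ≤ G.δ q' a b qs * η ^ k := by
          rw [pow_succ']
          exact mul_le_mul_of_nonneg_right hδη (pow_nonneg hη.le k)
        linarith
    calc (∑ b : A, τ (q' :: t) a b *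
            ∑ q : Q, (if q ∈ T then 0 else G.δ q' a b q * AC G T τ (q :: q' :: t) m'))
        ≤ ∑ b : A, τ (q' :: t) a b * (1 - η ^ (k+1)) := by
          refine Finset.sum_le_sum fun b _ => ?_
          exact mul_le_mul_of_nonneg_left (hinner b) ((hτ (q'::t) a).1 b)
      _ = 1 - η ^ (k+1) := by
          rw [← Finset.sum_mul, (hτ (q'::t) a).2, one_mul]

end PartC

section PartC2
attribute [local instance] Classical.propDecidable
variable {Q A : Type} [Fintype Q] [Fintype A]

lemma hprob_avoid_mem_W (G : Game Q A) (T : Finset Q) [Nonempty A] (d0 : Q → ℝ)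
    (τ : Strat2 Q A) (hG : IsGame G) (hd0 : IsDist d0) (hτ : IsStrat2 τ)
    (hsupp : ∀ q, 0 < d0 q → q ∈ Wset G T) :
    ∀ (i : ℕ) (f : Fin (i+1) → Q), (¬ ∃ j, f j ∈ T) →
      hprob G d0 (σW G T) τ (List.ofFn f).reverse ≠ 0 →
      f (Fin.last i) ∈ Wset G T := by
  intro i
  induction i with
  | zero =>
    intro f _ hne
    have hrw : hprob G d0 (σW G T) τ (List.ofFn f).reverse = d0 (f 0) := by
      simp [hprob]
    rw [hrw] at hne
    exact hsupp (f 0) (lt_of_le_of_ne (hd0.1 _) (Ne.symm hne))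
  | succ i ih =>
    intro f havoid hne
    set g : Fin (i+1) → Q := fun j => f j.castSucc with hg
    have hrev : (List.ofFn f).reverse = f (Fin.last (i+1)) :: (List.ofFn g).reverse :=
      rev_ofFn_cons f
    rw [hrev, hprob_cons G d0 (σW G T) τ _ (by simp) _] at hne
    have hK : K G (σW G T) τ (List.ofFn g).reverse (f (Fin.last (i+1))) ≠ 0 :=
      fun hc => hne (by rw [hc, zero_mul])
    have hp : hprob G d0 (σW G T) τ (List.ofFn g).reverse ≠ 0 :=
      fun hc => hne (by rw [hc, mul_zero])
    have hgavoid : ¬ ∃ j, g j ∈ T := fun ⟨j, hj⟩ => havoid ⟨j.castSucc, hj⟩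
    have hgW : g (Fin.last i) ∈ Wset G T := ih g hgavoid hp
    have hgT : g (Fin.last i) ∉ T := fun hc => hgavoid ⟨Fin.last i, hc⟩
    rw [rev_ofFn_cons g, K_σW] at hK
    obtain ⟨b, -, hb⟩ := Finset.exists_ne_zero_of_sum_ne_zero hK
    have hδ : G.δ (g (Fin.last i)) (pickA G T (g (Fin.last i))) b (f (Fin.last (i+1))) ≠ 0 :=
      fun hc => hb (by rw [hc, mul_zero])
    have hδpos : 0 < G.δ (g (Fin.last i)) (pickA G T (g (Fin.last i))) b (f (Fin.last (i+1))) :=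
      lt_of_le_of_ne (hG.1 _ _ _ _) (Ne.symm hδ)
    exact (pickA_spec G T hgW hgT b).1 hδpos

lemma avoid_bridge (G : Game Q A) (T : Finset Q) [Nonempty A] (d0 : Q → ℝ)
    (τ : Strat2 Q A) :
    ∀ (m i : ℕ), avoidProb G d0 (σW G T) τ T (i + m)
      = ∑ f : Fin (i+1) → Q, if ∃ j, f j ∈ T then 0 else
          hprob G d0 (σW G T) τ (List.ofFn f).reverse * AC G T τ (List.ofFn f).reverse m := by
  intro m
  induction m with
  | zero =>
    intro i
    rw [Nat.add_zero, avoidProb]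
    refine Finset.sum_congr rfl fun f _ => ?_
    split
    · rfl
    · rw [show AC G T τ (List.ofFn f).reverse 0 = 1 from rfl, mul_one]
  | succ m ih =>
    intro i
    rw [show i + (m+1) = (i+1) + m by omega, ih (i+1), sum_snoc (k := i+1)]
    refine Finset.sum_congr rfl fun f _ => ?_
    have hterm : ∀ q : Q,
        (if ∃ j, (Fin.snoc f q : Fin (i+2) → Q) j ∈ T then (0:ℝ) else
          hprob G d0 (σW G T) τ (List.ofFn (Fin.snoc f q : Fin (i+2) → Q)).reverse *
            AC G T τ (List.ofFn (Fin.snoc f q : Fin (i+2) → Q)).reverse m)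
        = if ∃ j, f j ∈ T then 0 else
            hprob G d0 (σW G T) τ (List.ofFn f).reverse *
              (if q ∈ T then 0 else K G (σW G T) τ (List.ofFn f).reverse q *
                AC G T τ (q :: (List.ofFn f).reverse) m) := by
      intro q
      by_cases hf : ∃ j, f j ∈ T
      · rw [if_pos ((exists_snoc_iff f q T).mpr (Or.inl hf)), if_pos hf]
      · rw [if_neg hf]
        by_cases hq : q ∈ T
        · rw [if_pos ((exists_snoc_iff f q T).mpr (Or.inr hq)), if_pos hq, mul_zero]
        · rw [if_neg (fun hc => by
            rcases (exists_snoc_iff f q T).mp hc with h | h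
            · exact hf h
            · exact hq h), if_neg hq]
          rw [ofFn_snoc_reverse, hprob_cons G d0 (σW G T) τ _ (by simp) q]
          ring
    rw [Finset.sum_congr rfl fun q _ => hterm q]
    by_cases hf : ∃ j, f j ∈ T
    · rw [if_pos hf]
      exact Finset.sum_eq_zero fun q _ => if_pos hf
    · rw [if_neg hf]
      rw [Finset.sum_congr rfl fun q _ => if_neg hf, ← Finset.mul_sum]
      congr 1

lemma avoid_le_one (G : Game Q A) (d0 : Q → ℝ) (σ : Strat1 Q A) (τ : Strat2 Q A)
    (T : Finset Q) (hG : IsGame G) (hd0 : IsDist d0) (hσ : IsStrat1 σ) (hτ : IsStrat2 τ)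
    (i : ℕ) : avoidProb G d0 σ τ T i ≤ 1 := by
  have htot := reach_add_avoid G d0 σ τ T hG hd0 hσ hτ i
  have hreach : 0 ≤ reachProb G d0 σ τ T i := by
    refine Finset.sum_nonneg fun h _ => ?_
    split
    · exact hprob_nonneg G d0 σ τ hG hd0 hσ hτ _
    · exact le_refl 0
  linarith

lemma avoid_contract (G : Game Q A) (T : Finset Q) [Nonempty A] [Nonempty Q] (d0 : Q → ℝ)
    (τ : Strat2 Q A) (hG : IsGame G) (hd0 : IsDist d0) (hτ : IsStrat2 τ)
    {η : ℝ} (hη : 0 < η) (hη1 : η ≤ 1)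
    (hηmin : ∀ q a b q', 0 < G.δ q a b q' → η ≤ G.δ q a b q')
    (hsupp : ∀ q, 0 < d0 q → q ∈ Wset G T) (i : ℕ) :
    avoidProb G d0 (σW G T) τ T (i + Fintype.card Q)
      ≤ (1 - η ^ (Fintype.card Q - 1)) * avoidProb G d0 (σW G T) τ T i := by
  have hσ := σW_isStrat G T
  rw [avoid_bridge G T d0 τ (Fintype.card Q) i, avoidProb, Finset.mul_sum]
  refine Finset.sum_le_sum fun f _ => ?_
  by_cases hf : ∃ j, f j ∈ T
  · rw [if_pos hf, if_pos hf, mul_zero]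
  · rw [if_neg hf, if_neg hf]
    by_cases hp : hprob G d0 (σW G T) τ (List.ofFn f).reverse = 0
    · rw [hp, zero_mul, mul_zero]
    · have hW := hprob_avoid_mem_W G T d0 τ hG hd0 hτ hsupp i f hf hp
      have hT : f (Fin.last i) ∉ T := fun hc => hf ⟨Fin.last i, hc⟩
      have hrk : rankI G T (f (Fin.last i)) ≤ (Fintype.card Q - 1) + 1 := by
        have h1 := rankI_le G T hW
        have hc := Fintype.card_pos (α := Q)
        omega
      have hAC : AC G T τ (List.ofFn f).reverse (Fintype.card Q)
          ≤ 1 - η ^ (Fintype.card Q - 1) := by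
        rw [rev_ofFn_cons f]
        exact AC_contract G T τ hG hτ hη hη1 hηmin (Fintype.card Q - 1) (Fintype.card Q)
          _ _ hW hT hrk (Nat.sub_le _ _)
      have hpnn : 0 ≤ hprob G d0 (σW G T) τ (List.ofFn f).reverse :=
        hprob_nonneg G d0 (σW G T) τ hG hd0 hσ hτ _
      calc hprob G d0 (σW G T) τ (List.ofFn f).reverse * AC G T τ (List.ofFn f).reverse _
          ≤ hprob G d0 (σW G T) τ (List.ofFn f).reverse * (1 - η ^ (Fintype.card Q - 1)) :=
            mul_le_mul_of_nonneg_left hAC hpnn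
        _ = (1 - η ^ (Fintype.card Q - 1)) * hprob G d0 (σW G T) τ (List.ofFn f).reverse := by
            ring

/-- Part C: if the support of `d0` lies in the winning set, player 1 wins almost surely. -/
lemma partC_main (G : Game Q A) (T : Finset Q) [Nonempty A] [Nonempty Q] (d0 : Q → ℝ)
    (hG : IsGame G) (hd0 : IsDist d0)
    {η : ℝ} (hη : 0 < η) (hη1 : η ≤ 1)
    (hηmin : ∀ q a b q', 0 < G.δ q a b q' → η ≤ G.δ q a b q')
    (hsupp : ∀ q, 0 < d0 q → q ∈ Wset G T) :
    ∀ τ, IsStrat2 τ → ∀ ε : ℝ, 0 < ε → ∃ i, 1 - ε ≤ reachProb G d0 (σW G T) τ T i := by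
  intro τ hτ ε hε
  have hσ := σW_isStrat G T
  set n := Fintype.card Q with hn
  set c := 1 - η ^ (n - 1) with hc
  have hc0 : 0 ≤ c := by
    have := pow_le_one₀ hη.le hη1 (n := n - 1)
    linarith
  have hc1 : c < 1 := by
    have := pow_pos hη (n - 1)
    linarith
  have hdecay : ∀ k : ℕ, avoidProb G d0 (σW G T) τ T (k * n) ≤ c ^ k := by
    intro k
    induction k with
    | zero =>
      rw [zero_mul, pow_zero]
      exact avoid_le_one G d0 (σW G T) τ T hG hd0 hσ hτ 0
    | succ k ih =>
      have h1 : (k+1) * n = k * n + n := by ring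
      rw [h1, pow_succ]
      calc avoidProb G d0 (σW G T) τ T (k * n + n)
          ≤ c * avoidProb G d0 (σW G T) τ T (k * n) :=
            avoid_contract G T d0 τ hG hd0 hτ hη hη1 hηmin hsupp (k * n)
        _ ≤ c * c ^ k := mul_le_mul_of_nonneg_left ih hc0
        _ = c ^ k * c := by ring
  obtain ⟨k, hk⟩ := exists_pow_lt_of_lt_one hε hc1
  refine ⟨k * n, ?_⟩
  have htot := reach_add_avoid G d0 (σW G T) τ T hG hd0 hσ hτ (k * n)
  have := hdecay k
  linarith

end PartC2

/-- if `d₀` is not almost-sure winning for the reachability objective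
`◇T`, then there is a memoryless player-2 strategy `τ` such that for all player-1
strategies `σ` and all `i`, the probability of reaching `T` within `i` steps is at
most `1 - η₀·η^n`, where `n = |Q|`, `η` is the smallest positive transition
probability and `η₀` the smallest positive probability in `d₀`. -/
theorem not_as_reach_spoiling {Q A : Type} [Fintype Q] [Fintype A]
    (G : Game Q A) (hG : IsGame G) (T : Finset Q) (d0 : Q → ℝ) (hd0 : IsDist d0)
    (η η0 : ℝ) (hη : 0 < η)
    (hηmin : ∀ q a b q', 0 < G.δ q a b q' → η ≤ G.δ q a b q')
    (hη0 : 0 < η0) (hη0min : ∀ q, 0 < d0 q → η0 ≤ d0 q)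
    (hnotAS : ¬ ∃ σ, IsStrat1 σ ∧ ∀ τ, IsStrat2 τ →
        ∀ ε : ℝ, 0 < ε → ∃ i, 1 - ε ≤ reachProb G d0 σ τ T i) :
    ∃ τ, IsStrat2 τ ∧ Memoryless2 τ ∧
      ∀ σ, IsStrat1 σ → ∀ i : ℕ,
        reachProb G d0 σ τ T i ≤ 1 - η0 * η ^ (Fintype.card Q) := by
  classical
  rcases isEmpty_or_nonempty A with hA | hA
  · haveI := hA
    refine ⟨fun _ _ _ => 0, fun h a => isEmptyElim a, fun h h' a _ => isEmptyElim a, ?_⟩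
    intro σ hσ
    exfalso
    have h1 := (hσ []).2
    rw [Finset.univ_eq_empty, Finset.sum_empty] at h1
    exact zero_ne_one h1
  · have hQ : Nonempty Q := by
      rcases isEmpty_or_nonempty Q with hQ | hQ
      · exfalso
        have h2 := hd0.2
        rw [Finset.univ_eq_empty, Finset.sum_empty] at h2
        exact zero_ne_one h2
      · exact hQ
    have hη1 : η ≤ 1 := by
      obtain ⟨q⟩ := hQ
      obtain ⟨a⟩ := hA
      have hsum := hG.2 q a a
      have hex : ∃ q', 0 < G.δ q a a q' := by
        by_contra hc
        push_neg at hc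
        have hz : (∑ q' : Q, G.δ q a a q') = 0 :=
          Finset.sum_eq_zero fun q' _ => le_antisymm (hc q') (hG.1 q a a q')
        rw [hz] at hsum
        exact zero_ne_one hsum
      obtain ⟨q', hq'⟩ := hex
      have h1 : G.δ q a a q' ≤ 1 := by
        rw [← hsum]
        exact Finset.single_le_sum (fun x _ => hG.1 q a a x) (Finset.mem_univ q')
      exact (hηmin q a a q' hq').trans h1
    by_cases hsupp : ∀ q, 0 < d0 q → q ∈ Wset G T
    · exact absurd ⟨σW G T, σW_isStrat G T,
        fun τ hτ ε hε => partC_main G T d0 hG hd0 hη hη1 hηmin hsupp τ hτ ε hε⟩ hnotAS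
    · push_neg at hsupp
      obtain ⟨q0, hq0pos, hq0⟩ := hsupp
      exact ⟨τB G T, τB_isStrat G T, τB_memoryless G T,
        partB_main G d0 T hG hd0 hη hη1 hηmin hη0 hη0min hq0pos hq0⟩
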